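/- arXiv:2601.08583 — 5 statements merged into one kernel-verified Lean document; each statement's English description precedes it below -/
import Mathlib

section
/- For integers m ≥ 3, d_1, ..., d_m and positive integers ε_1, ..., ε_{m-2}, set t = ε_1 + ... + ε_{m-2}, d = d_1 + d_2 + 1 − t, τ = d_1² + d_1d_2 + d_2² − t(d_1 + d_2) − Σ_{j=1}^{m-2} ε_j d_{j+2} + Σ_{1≤i<j≤m-2} ε_i ε_j, and τ_max = (d−1)² − d_1(d − d_1 − 1). Then (as rational numbers) τ_max − τ = t(t+1)/2 + (Σ_{j=1}^{m-2} (ε_j² − ε_j))/2 + Σ_{j=1}^{m-2} ε_j (d_{j+2} − d_2). -/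
open Finset

lemma sq_sum_aux (ε : ℕ → ℤ) : ∀ n : ℕ, (∑ j ∈ Icc 1 n, ε j)^2
    = ∑ j ∈ Icc 1 n, (ε j)^2 + 2 * ∑ i ∈ Icc 1 n, ∑ j ∈ Icc (i+1) n, ε i * ε j := by
  intro n
  induction n with
  | zero => simp
  | succ n ih =>
    have h1 : Icc 1 (n+1) = insert (n+1) (Icc 1 n) := by
      rw [← Finset.insert_Icc_right_eq_Icc_add_one (by omega)]
    have hnot : (n+1) ∉ Icc 1 n := by simp
    have hinner : ∀ i ∈ Icc 1 n, ∑ j ∈ Icc (i+1) (n+1), ε i * ε j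
        = (∑ j ∈ Icc (i+1) n, ε i * ε j) + ε i * ε (n+1) := by
      intro i hi
      simp only [Finset.mem_Icc] at hi
      rw [← Finset.insert_Icc_right_eq_Icc_add_one (by omega), Finset.sum_insert (by simp)]
      ring
    rw [h1, Finset.sum_insert hnot, Finset.sum_insert hnot, Finset.sum_insert hnot,
      Finset.sum_congr rfl hinner, Finset.sum_add_distrib, ← Finset.sum_mul]
    simp only [show Icc (n+1+1) (n+1) = ∅ by simp, Finset.sum_empty]
    ring_nf
    ring_nf at ih
    nlinarith [ih]

/-- Corollary 5.2 (1): the difference between the du Plessis–Wall upper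
bound `τ_max` and the Tjurina number `τ` given by Theorem 3.1. -/
theorem tau_max_minus_tau (m : ℕ) (hm : 3 ≤ m) (d ε : ℕ → ℤ)
    (hε : ∀ j ∈ Icc 1 (m - 2), 0 < ε j)
    (t : ℤ) (ht : t = ∑ j ∈ Icc 1 (m - 2), ε j)
    (D : ℤ) (hD : D = d 1 + d 2 + 1 - t)
    (τ : ℤ)
    (hτ : τ = (d 1) ^ 2 + d 1 * d 2 + (d 2) ^ 2 - t * (d 1 + d 2)
        - ∑ j ∈ Icc 1 (m - 2), ε j * d (j + 2)
        + ∑ i ∈ Icc 1 (m - 2), ∑ j ∈ Icc (i + 1) (m - 2), ε i * ε j)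
    (τmax : ℤ) (hτmax : τmax = (D - 1) ^ 2 - d 1 * (D - d 1 - 1)) :
    (τmax : ℚ) - (τ : ℚ) = (t : ℚ) * (t + 1) / 2
      + (∑ j ∈ Icc 1 (m - 2), ((ε j : ℚ) ^ 2 - (ε j : ℚ))) / 2
      + ∑ j ∈ Icc 1 (m - 2), (ε j : ℚ) * ((d (j + 2) : ℚ) - (d 2 : ℚ)) := by
  have key : 2 * (τmax - τ) = t * (t + 1)
      + (∑ j ∈ Icc 1 (m - 2), ((ε j)^2 - ε j))
      + 2 * ∑ j ∈ Icc 1 (m - 2), ε j * (d (j + 2) - d 2) := by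
    have hsq := sq_sum_aux ε (m - 2)
    rw [← ht] at hsq
    have h2 : ∑ j ∈ Icc 1 (m-2), ((ε j)^2 - ε j)
        = (∑ j ∈ Icc 1 (m-2), (ε j)^2) - t := by
      rw [Finset.sum_sub_distrib, ht]
    have h3 : ∑ j ∈ Icc 1 (m-2), ε j * (d (j+2) - d 2)
        = (∑ j ∈ Icc 1 (m-2), ε j * d (j+2)) - t * d 2 := by
      rw [ht, Finset.sum_mul]
      rw [← Finset.sum_sub_distrib]
      congr 1; ext j; ring
    rw [h2, h3, hτmax, hτ, hD]
    nlinarith [hsq]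
  have : ((2 * (τmax - τ) : ℤ) : ℚ) = ((t * (t + 1)
      + (∑ j ∈ Icc 1 (m - 2), ((ε j)^2 - ε j))
      + 2 * ∑ j ∈ Icc 1 (m - 2), ε j * (d (j + 2) - d 2) : ℤ) : ℚ) := by
    exact_mod_cast key
  push_cast at this
  linarith [this]
end

section
/- For integers m ≥ 3, d_1 ≤ d_2 ≤ ... ≤ d_m and positive integers ε_1, ..., ε_{m-2}, set t = ε_1 + ... + ε_{m-2}, d = d_1 + d_2 + 1 − t, τ = d_1² + d_1d_2 + d_2² − t(d_1 + d_2) − Σ_{j=1}^{m-2} ε_j d_{j+2} + Σ_{1≤i<j≤m-2} ε_i ε_j, and τ_max = (d−1)² − d_1(d − d_1 − 1). Then τ_max − τ ≥ t(t+1)/2; in particular τ < τ_max. -/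
open Finset

lemma sq_sum_Icc (ε : ℕ → ℤ) (n : ℕ) :
    (∑ j ∈ Icc 1 n, ε j) ^ 2
      = ∑ j ∈ Icc 1 n, (ε j) ^ 2
        + 2 * ∑ i ∈ Icc 1 n, ∑ j ∈ Icc (i + 1) n, ε i * ε j := by
  induction n with
  | zero => simp
  | succ n ih =>
    have h1 : (1 : ℕ) ≤ n + 1 := Nat.le_add_left 1 n
    rw [Finset.sum_Icc_succ_top h1, Finset.sum_Icc_succ_top h1,
      Finset.sum_Icc_succ_top h1]
    have hin : ∀ i ∈ Icc 1 n, (∑ j ∈ Icc (i + 1) (n + 1), ε i * ε j)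
        = (∑ j ∈ Icc (i + 1) n, ε i * ε j) + ε i * ε (n + 1) := by
      intro i hi
      have : i + 1 ≤ n + 1 := by
        have := (Finset.mem_Icc.mp hi).2; omega
      rw [Finset.sum_Icc_succ_top this]
    rw [Finset.sum_congr rfl hin, Finset.sum_add_distrib]
    have hempty : Icc (n + 1 + 1) (n + 1) = (∅ : Finset ℕ) := by
      apply Finset.Icc_eq_empty; omega
    rw [hempty, Finset.sum_empty]
    have hmul : (∑ i ∈ Icc 1 n, ε i * ε (n + 1))
        = (∑ i ∈ Icc 1 n, ε i) * ε (n + 1) := by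
      rw [Finset.sum_mul]
    rw [hmul]
    nlinarith [ih]

/-- From Corollary 5.2 (1): for sorted exponents `d₁ ≤ ⋯ ≤ d_m`, the du
Plessis–Wall bound satisfies `τ_max − τ ≥ t(t+1)/2`; in particular `τ < τ_max`. -/
theorem tau_lt_tau_max (m : ℕ) (hm : 3 ≤ m) (d ε : ℕ → ℤ)
    (hsort : ∀ i ∈ Icc 1 m, ∀ j ∈ Icc 1 m, i ≤ j → d i ≤ d j)
    (hε : ∀ j ∈ Icc 1 (m - 2), 0 < ε j)
    (t : ℤ) (ht : t = ∑ j ∈ Icc 1 (m - 2), ε j)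
    (D : ℤ) (hD : D = d 1 + d 2 + 1 - t)
    (τ : ℤ)
    (hτ : τ = (d 1) ^ 2 + d 1 * d 2 + (d 2) ^ 2 - t * (d 1 + d 2)
        - ∑ j ∈ Icc 1 (m - 2), ε j * d (j + 2)
        + ∑ i ∈ Icc 1 (m - 2), ∑ j ∈ Icc (i + 1) (m - 2), ε i * ε j)
    (τmax : ℤ) (hτmax : τmax = (D - 1) ^ 2 - d 1 * (D - d 1 - 1)) :
    (t : ℚ) * (t + 1) / 2 ≤ (τmax : ℚ) - (τ : ℚ) ∧ τ < τmax := by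
  -- basic facts
  have hA : ∑ j ∈ Icc 1 (m - 2), ε j * d 2 ≤ ∑ j ∈ Icc 1 (m - 2), ε j * d (j + 2) := by
    apply Finset.sum_le_sum
    intro j hj
    have hj' := Finset.mem_Icc.mp hj
    have hd : d 2 ≤ d (j + 2) := by
      apply hsort 2 (by simp [Finset.mem_Icc]; omega) (j + 2)
        (by simp [Finset.mem_Icc]; omega) (by omega)
    exact mul_le_mul_of_nonneg_left hd (le_of_lt (hε j hj))
  have hAt : ∑ j ∈ Icc 1 (m - 2), ε j * d 2 = t * d 2 := by
    rw [ht, Finset.sum_mul]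
  have hsq : t ≤ ∑ j ∈ Icc 1 (m - 2), (ε j) ^ 2 := by
    rw [ht]
    apply Finset.sum_le_sum
    intro j hj
    have := hε j hj
    nlinarith
  have ht1 : (1 : ℤ) ≤ t := by
    rw [ht]
    calc (1 : ℤ) = ∑ _j ∈ Icc 1 1, (1 : ℤ) := by simp
    _ ≤ ∑ _j ∈ Icc 1 (m - 2), (1 : ℤ) := by
        apply Finset.sum_le_sum_of_subset_of_nonneg
        · apply Finset.Icc_subset_Icc_right; omega
        · intros; norm_num
    _ ≤ ∑ j ∈ Icc 1 (m - 2), ε j := by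
        apply Finset.sum_le_sum
        intro j hj; exact hε j hj
  have key := sq_sum_Icc ε (m - 2)
  rw [← ht] at key
  -- main integer inequality: 2*(τmax - τ) ≥ t^2 + t
  have heq : 2 * (τmax - τ)
      = t ^ 2 + (∑ j ∈ Icc 1 (m - 2), (ε j) ^ 2)
        + 2 * ((∑ j ∈ Icc 1 (m - 2), ε j * d (j + 2)) - t * d 2) := by
    rw [hτ, hτmax, hD]; linear_combination key
  have hmain : t ^ 2 + t ≤ 2 * (τmax - τ) := by
    rw [heq]; linarith [hA, hAt, hsq]
  have hlt : τ < τmax := by nlinarith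
  refine ⟨?_, hlt⟩
  rw [div_le_iff₀ (by norm_num : (0:ℚ) < 2)]
  have : ((t ^ 2 + t : ℤ) : ℚ) ≤ ((2 * (τmax - τ) : ℤ) : ℚ) := by exact_mod_cast hmain
  push_cast at this
  nlinarith [this]
end

section
/- For integers m ≥ 3, d_1, ..., d_m and positive integers ε_1, ..., ε_{m-2}, set t = ε_1 + ... + ε_{m-2}, d = d_1 + d_2 + 1 − t, τ = d_1² + d_1d_2 + d_2² − t(d_1 + d_2) − Σ_{j=1}^{m-2} ε_j d_{j+2} + Σ_{1≤i<j≤m-2} ε_i ε_j, and τ'_max = (d−1)² − d_1(d − d_1 − 1) − (2d_1 + 2 − d)(2d_1 + 1 − d)/2. Then (as rational numbers) τ'_max − τ = (t² − (t − (d_2 − d_1))²)/2 + (Σ_{j=1}^{m-2} (ε_j² − ε_j) + (d_2 − d_1))/2 + Σ_{j=1}^{m-2} ε_j (d_{j+2} − d_2). -/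
open Finset

lemma sq_sum_int_aux (a : ℕ → ℤ) (n : ℕ) :
    (∑ j ∈ Icc 1 n, a j) ^ 2 =
      (∑ j ∈ Icc 1 n, (a j) ^ 2)
      + 2 * ∑ i ∈ Icc 1 n, ∑ j ∈ Icc (i + 1) n, a i * a j := by
  induction n with
  | zero => simp
  | succ n ih =>
    have hins : Icc 1 (n + 1) = insert (n + 1) (Icc 1 n) :=
      (Finset.insert_Icc_right_eq_Icc_add_one (by omega)).symm
    have hnot : (n + 1) ∉ Icc 1 n := by simp
    have hinner : ∀ i ∈ Icc 1 n,
        ∑ j ∈ Icc (i + 1) (n + 1), a i * a j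
          = a i * a (n + 1) + ∑ j ∈ Icc (i + 1) n, a i * a j := by
      intro i hi
      simp only [Finset.mem_Icc] at hi
      rw [← Finset.insert_Icc_right_eq_Icc_add_one (by omega), Finset.sum_insert (by simp)]
    rw [hins, Finset.sum_insert hnot, Finset.sum_insert hnot,
      Finset.sum_insert hnot, Finset.sum_congr rfl hinner,
      Finset.sum_add_distrib]
    have hempty : Icc (n + 1 + 1) (n + 1) = ∅ := by
      apply Finset.Icc_eq_empty; omega
    rw [hempty, Finset.sum_empty, ← Finset.sum_mul]
    ring_nf
    rw [ih]
    ring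

/-- Corollary 5.2 (2): the difference between the refined du Plessis–Wall
upper bound `τ'_max` and the Tjurina number `τ` given by Theorem 3.1. -/
theorem tau_max'_minus_tau (m : ℕ) (hm : 3 ≤ m) (d ε : ℕ → ℤ)
    (hε : ∀ j ∈ Icc 1 (m - 2), 0 < ε j)
    (t : ℤ) (ht : t = ∑ j ∈ Icc 1 (m - 2), ε j)
    (D : ℤ) (hD : D = d 1 + d 2 + 1 - t)
    (τ : ℤ)
    (hτ : τ = (d 1) ^ 2 + d 1 * d 2 + (d 2) ^ 2 - t * (d 1 + d 2)
        - ∑ j ∈ Icc 1 (m - 2), ε j * d (j + 2)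
        + ∑ i ∈ Icc 1 (m - 2), ∑ j ∈ Icc (i + 1) (m - 2), ε i * ε j)
    (τmax' : ℚ)
    (hτmax' : τmax' = ((D : ℚ) - 1) ^ 2 - (d 1 : ℚ) * ((D : ℚ) - d 1 - 1)
        - (2 * (d 1 : ℚ) + 2 - D) * (2 * (d 1 : ℚ) + 1 - D) / 2) :
    τmax' - (τ : ℚ) =
      ((t : ℚ) ^ 2 - ((t : ℚ) - ((d 2 : ℚ) - d 1)) ^ 2) / 2
      + ((∑ j ∈ Icc 1 (m - 2), ((ε j : ℚ) ^ 2 - (ε j : ℚ)))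
          + ((d 2 : ℚ) - d 1)) / 2
      + ∑ j ∈ Icc 1 (m - 2), (ε j : ℚ) * ((d (j + 2) : ℚ) - (d 2 : ℚ)) := by
  subst hτmax' hD hτ
  -- turn the two ℚ-valued sums in the goal into casts of ℤ-valued sums
  have hb : (∑ j ∈ Icc 1 (m - 2), ((ε j : ℚ) ^ 2 - (ε j : ℚ)))
      = ((∑ j ∈ Icc 1 (m - 2), (ε j ^ 2 - ε j) : ℤ) : ℚ) := by
    push_cast; rfl
  have hc : (∑ j ∈ Icc 1 (m - 2), (ε j : ℚ) * ((d (j + 2) : ℚ) - (d 2 : ℚ)))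
      = ((∑ j ∈ Icc 1 (m - 2), ε j * (d (j + 2) - d 2) : ℤ) : ℚ) := by
    push_cast; rfl
  rw [hb, hc]
  -- integer-level identities
  have k1 : (∑ j ∈ Icc 1 (m - 2), (ε j ^ 2 - ε j))
      = (∑ j ∈ Icc 1 (m - 2), ε j ^ 2) - t := by
    rw [Finset.sum_sub_distrib, ht]
  have k2 : (∑ j ∈ Icc 1 (m - 2), ε j * (d (j + 2) - d 2))
      = (∑ j ∈ Icc 1 (m - 2), ε j * d (j + 2)) - t * d 2 := by
    rw [ht, Finset.sum_mul, ← Finset.sum_sub_distrib]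
    exact Finset.sum_congr rfl fun i _ => by ring
  have k3 : t ^ 2 = (∑ j ∈ Icc 1 (m - 2), ε j ^ 2)
      + 2 * ∑ i ∈ Icc 1 (m - 2), ∑ j ∈ Icc (i + 1) (m - 2), ε i * ε j := by
    rw [ht]; exact sq_sum_int_aux ε (m - 2)
  rw [k1, k2]
  have k3Q := congrArg (fun z : ℤ => (z : ℚ)) k3
  push_cast [-Int.cast_sum] at k3Q ⊢
  linear_combination k3Q / 2
end

section
/- For integers m ≥ 3, d_1 ≤ d_2 ≤ ... ≤ d_m and positive integers ε_1, ..., ε_{m-2}, set t = ε_1 + ... + ε_{m-2}, d = d_1 + d_2 + 1 − t, τ = d_1² + d_1d_2 + d_2² − t(d_1 + d_2) − Σ_{j=1}^{m-2} ε_j d_{j+2} + Σ_{1≤i<j≤m-2} ε_i ε_j, and τ'_max = (d−1)² − d_1(d − d_1 − 1) − (2d_1 + 2 − d)(2d_1 + 1 − d)/2. If 2d_1 ≥ d, then τ ≤ τ'_max. -/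
open Finset

lemma sq_sum_triangle (ε : ℕ → ℤ) : ∀ n : ℕ,
    (∑ j ∈ Icc 1 n, ε j) ^ 2 =
      ∑ j ∈ Icc 1 n, (ε j) ^ 2 +
        2 * ∑ i ∈ Icc 1 n, ∑ j ∈ Icc (i + 1) n, ε i * ε j := by
  intro n
  induction n with
  | zero => simp
  | succ n ih =>
    rw [Finset.sum_Icc_succ_top (by omega : 1 ≤ n + 1),
        Finset.sum_Icc_succ_top (by omega : 1 ≤ n + 1) (fun j => (ε j) ^ 2),
        Finset.sum_Icc_succ_top (by omega : 1 ≤ n + 1)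
          (fun i => ∑ j ∈ Icc (i + 1) (n + 1), ε i * ε j)]
    have h0 : ∑ j ∈ Icc (n + 1 + 1) (n + 1), ε (n + 1) * ε j = 0 := by
      rw [Finset.Icc_eq_empty (by omega)]; simp
    have hinner : ∑ i ∈ Icc 1 n, ∑ j ∈ Icc (i + 1) (n + 1), ε i * ε j
        = ∑ i ∈ Icc 1 n, (∑ j ∈ Icc (i + 1) n, ε i * ε j + ε i * ε (n + 1)) := by
      apply Finset.sum_congr rfl
      intro i hi
      have hi' := Finset.mem_Icc.mp hi
      rw [Finset.sum_Icc_succ_top (by omega)]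
    rw [h0, hinner, Finset.sum_add_distrib, ← Finset.sum_mul]
    linear_combination ih

/-- The refined du Plessis–Wall bound: if `2d₁ ≥ d` then `τ ≤ τ'_max`. -/
theorem tau_le_tau_max' (m : ℕ) (hm : 3 ≤ m) (d ε : ℕ → ℤ)
    (hsort : ∀ i ∈ Icc 1 m, ∀ j ∈ Icc 1 m, i ≤ j → d i ≤ d j)
    (hε : ∀ j ∈ Icc 1 (m - 2), 0 < ε j)
    (t : ℤ) (ht : t = ∑ j ∈ Icc 1 (m - 2), ε j)
    (D : ℤ) (hD : D = d 1 + d 2 + 1 - t)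
    (τ : ℤ)
    (hτ : τ = (d 1) ^ 2 + d 1 * d 2 + (d 2) ^ 2 - t * (d 1 + d 2)
        - ∑ j ∈ Icc 1 (m - 2), ε j * d (j + 2)
        + ∑ i ∈ Icc 1 (m - 2), ∑ j ∈ Icc (i + 1) (m - 2), ε i * ε j)
    (τmax' : ℚ)
    (hτmax' : τmax' = ((D : ℚ) - 1) ^ 2 - (d 1 : ℚ) * ((D : ℚ) - d 1 - 1)
        - (2 * (d 1 : ℚ) + 2 - D) * (2 * (d 1 : ℚ) + 1 - D) / 2)
    (h2d1 : D ≤ 2 * d 1) :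
    (τ : ℚ) ≤ τmax' := by
  have hd12 : d 1 ≤ d 2 :=
    hsort 1 (by simp [Finset.mem_Icc]; omega) 2 (by simp [Finset.mem_Icc]; omega) (by omega)
  have hA : t * d 2 ≤ ∑ j ∈ Icc 1 (m - 2), ε j * d (j + 2) := by
    rw [ht, Finset.sum_mul]
    apply Finset.sum_le_sum
    intro j hj
    have hj' := Finset.mem_Icc.mp hj
    have h1 : d 2 ≤ d (j + 2) :=
      hsort 2 (by simp [Finset.mem_Icc]; omega) (j + 2)
        (by simp [Finset.mem_Icc]; omega) (by omega)
    have h2 : 0 < ε j := hε j hj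
    nlinarith
  have hSq : ∑ j ∈ Icc 1 (m - 2), ε j ≤ ∑ j ∈ Icc 1 (m - 2), (ε j) ^ 2 := by
    apply Finset.sum_le_sum
    intro j hj
    have := hε j hj
    nlinarith
  have hid : t ^ 2 = ∑ j ∈ Icc 1 (m - 2), (ε j) ^ 2 +
      2 * ∑ i ∈ Icc 1 (m - 2), ∑ j ∈ Icc (i + 1) (m - 2), ε i * ε j := by
    rw [ht]; exact sq_sum_triangle ε (m - 2)
  have hSq' : t ≤ ∑ j ∈ Icc 1 (m - 2), (ε j) ^ 2 := by rw [ht]; exact hSq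
  have hu : d 2 - d 1 ≤ t - 1 := by omega
  have hprod : 0 ≤ (d 2 - d 1) * (2 * t - (d 2 - d 1) + 1) :=
    mul_nonneg (by omega) (by omega)
  have key : 2 * τ ≤ 2 * (D - 1) ^ 2 - 2 * (d 1) * (D - d 1 - 1)
      - (2 * d 1 + 2 - D) * (2 * d 1 + 1 - D) := by
    subst hτ hD
    nlinarith [hA, hSq', hid, hprod]
  have key' : ((2 * τ : ℤ) : ℚ) ≤ ((2 * (D - 1) ^ 2 - 2 * (d 1) * (D - d 1 - 1)
      - (2 * d 1 + 2 - D) * (2 * d 1 + 1 - D) : ℤ) : ℚ) := by exact_mod_cast key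
  push_cast at key'
  rw [hτmax']
  linarith
end

section
/- For integers m ≥ 3, d_1 ≤ d_2 ≤ ... ≤ d_m and positive integers ε_1, ..., ε_{m-2}, set t = ε_1 + ... + ε_{m-2}, d = d_1 + d_2 + 1 − t, τ = d_1² + d_1d_2 + d_2² − t(d_1 + d_2) − Σ_{j=1}^{m-2} ε_j d_{j+2} + Σ_{1≤i<j≤m-2} ε_i ε_j, and τ_max = (d−1)² − d_1(d − d_1 − 1). Then τ_max − τ = 2 if and only if m = 3, ε_1 = 1 and d_3 = d_2 + 1. -/
open Finset

private lemma sq_sum_Icc_aux (f : ℕ → ℤ) (n : ℕ) :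
    (∑ j ∈ Icc 1 n, f j) ^ 2
      = ∑ j ∈ Icc 1 n, (f j) ^ 2
        + 2 * ∑ i ∈ Icc 1 n, ∑ j ∈ Icc (i + 1) n, f i * f j := by
  induction n with
  | zero => simp
  | succ n ih =>
    rw [Finset.sum_Icc_succ_top (by omega : 1 ≤ n + 1),
        Finset.sum_Icc_succ_top (by omega : 1 ≤ n + 1) (fun j => (f j) ^ 2),
        Finset.sum_Icc_succ_top (by omega : 1 ≤ n + 1)
          (fun i => ∑ j ∈ Icc (i + 1) (n + 1), f i * f j)]
    have h0 : ∑ j ∈ Icc (n + 1 + 1) (n + 1), f (n + 1) * f j = 0 := by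
      rw [Finset.Icc_eq_empty (by omega)]; simp
    have h1 : ∑ i ∈ Icc 1 n, ∑ j ∈ Icc (i + 1) (n + 1), f i * f j
        = (∑ i ∈ Icc 1 n, ∑ j ∈ Icc (i + 1) n, f i * f j)
          + (∑ i ∈ Icc 1 n, f i) * f (n + 1) := by
      rw [Finset.sum_mul, ← Finset.sum_add_distrib]
      refine Finset.sum_congr rfl fun i hi => ?_
      have hi' : i ≤ n := by simp [Finset.mem_Icc] at hi; omega
      rw [Finset.sum_Icc_succ_top (by omega : i + 1 ≤ n + 1)]
    rw [h0, h1]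
    linear_combination ih

/-- Corollary 5.4 (2) (minimal plus-one generated curves): `τ_max − τ = 2`
iff `m = 3`, `ε₁ = 1` and `d₃ = d₂ + 1`. -/
theorem mpog_characterization (m : ℕ) (hm : 3 ≤ m) (d ε : ℕ → ℤ)
    (hsort : ∀ i ∈ Icc 1 m, ∀ j ∈ Icc 1 m, i ≤ j → d i ≤ d j)
    (hε : ∀ j ∈ Icc 1 (m - 2), 0 < ε j)
    (t : ℤ) (ht : t = ∑ j ∈ Icc 1 (m - 2), ε j)
    (D : ℤ) (hD : D = d 1 + d 2 + 1 - t)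
    (τ : ℤ)
    (hτ : τ = (d 1) ^ 2 + d 1 * d 2 + (d 2) ^ 2 - t * (d 1 + d 2)
        - ∑ j ∈ Icc 1 (m - 2), ε j * d (j + 2)
        + ∑ i ∈ Icc 1 (m - 2), ∑ j ∈ Icc (i + 1) (m - 2), ε i * ε j)
    (τmax : ℤ) (hτmax : τmax = (D - 1) ^ 2 - d 1 * (D - d 1 - 1)) :
    τmax - τ = 2 ↔ m = 3 ∧ ε 1 = 1 ∧ d 3 = d 2 + 1 := by
  obtain ⟨n, rfl⟩ : ∃ n, m = n + 2 := ⟨m - 2, by omega⟩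
  have hn : 1 ≤ n := by omega
  simp only [Nat.add_sub_cancel] at hε ht hτ
  subst ht hD hτ hτmax
  have hε1 : ∀ j ∈ Icc 1 n, 1 ≤ ε j := fun j hj => hε j hj
  have key : (d 1 + d 2 + 1 - (∑ j ∈ Icc 1 n, ε j) - 1) ^ 2
        - d 1 * (d 1 + d 2 + 1 - (∑ j ∈ Icc 1 n, ε j) - d 1 - 1)
        - ((d 1) ^ 2 + d 1 * d 2 + (d 2) ^ 2 - (∑ j ∈ Icc 1 n, ε j) * (d 1 + d 2)
            - (∑ j ∈ Icc 1 n, ε j * d (j + 2))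
            + ∑ i ∈ Icc 1 n, ∑ j ∈ Icc (i + 1) n, ε i * ε j)
      = (∑ j ∈ Icc 1 n, (ε j) ^ 2)
        + (∑ i ∈ Icc 1 n, ∑ j ∈ Icc (i + 1) n, ε i * ε j)
        + ((∑ j ∈ Icc 1 n, ε j * d (j + 2)) - (∑ j ∈ Icc 1 n, ε j) * d 2) := by
    linear_combination sq_sum_Icc_aux ε n
  rw [key]
  have hQA : 0 ≤ (∑ j ∈ Icc 1 n, ε j * d (j + 2)) - (∑ j ∈ Icc 1 n, ε j) * d 2 := by
    rw [Finset.sum_mul, ← Finset.sum_sub_distrib]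
    refine Finset.sum_nonneg fun j hj => ?_
    have hj' : 1 ≤ j ∧ j ≤ n := by simpa [Finset.mem_Icc] using hj
    have hd : d 2 ≤ d (j + 2) := by
      refine hsort 2 (Finset.mem_Icc.mpr ⟨by omega, by omega⟩) (j + 2)
        (Finset.mem_Icc.mpr ⟨by omega, by omega⟩) (by omega)
    have := hε1 j hj
    nlinarith
  have hBn : (n : ℤ) ≤ ∑ j ∈ Icc 1 n, (ε j) ^ 2 := by
    calc (n : ℤ) = ∑ _j ∈ Icc 1 n, (1 : ℤ) := by
          simp [Finset.sum_const, Nat.card_Icc]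
      _ ≤ _ := Finset.sum_le_sum fun j hj => by nlinarith [hε1 j hj]
  have hnonneg : ∀ i ∈ Icc 1 n, 0 ≤ ∑ j ∈ Icc (i + 1) n, ε i * ε j := by
    intro i hi
    refine Finset.sum_nonneg fun j hj => ?_
    have hji : j ∈ Icc 1 n := by
      simp only [Finset.mem_Icc] at hi hj ⊢; omega
    nlinarith [hε1 i hi, hε1 j hji]
  have hP0 : 0 ≤ ∑ i ∈ Icc 1 n, ∑ j ∈ Icc (i + 1) n, ε i * ε j :=
    Finset.sum_nonneg hnonneg
  constructor
  · intro h
    have hn1 : n = 1 := by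
      by_contra hne
      have hn2 : 2 ≤ n := by omega
      have h1n : (1 : ℕ) ∈ Icc 1 n := Finset.mem_Icc.mpr ⟨by omega, by omega⟩
      have h2n : (2 : ℕ) ∈ Icc (1 + 1) n := Finset.mem_Icc.mpr ⟨by omega, by omega⟩
      have hinner : 1 ≤ ∑ j ∈ Icc (1 + 1) n, ε 1 * ε j := by
        calc (1 : ℤ) ≤ ε 1 * ε 2 := by
              nlinarith [hε1 1 h1n, hε1 2 (Finset.mem_Icc.mpr ⟨by omega, by omega⟩ : (2:ℕ) ∈ Icc 1 n)]
          _ ≤ _ := Finset.single_le_sum (f := fun j => ε 1 * ε j) (fun j hj => by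
              have hji : j ∈ Icc 1 n := by
                simp only [Finset.mem_Icc] at hj ⊢; omega
              show (0 : ℤ) ≤ ε 1 * ε j
              nlinarith [hε1 1 h1n, hε1 j hji]) h2n
      have hP1 : 1 ≤ ∑ i ∈ Icc 1 n, ∑ j ∈ Icc (i + 1) n, ε i * ε j :=
        le_trans hinner (Finset.single_le_sum hnonneg h1n)
      have : (2 : ℤ) ≤ (n : ℤ) := by exact_mod_cast hn2
      linarith
    subst hn1
    simp only [Finset.Icc_self, Finset.sum_singleton] at h
    rw [show Icc (1 + 1) 1 = ∅ from Finset.Icc_eq_empty (by omega),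
        Finset.sum_empty] at h
    norm_num at h
    have h1 : 1 ≤ ε 1 := hε1 1 (by simp)
    have hd : d 2 ≤ d 3 :=
      hsort 2 (Finset.mem_Icc.mpr ⟨by omega, by omega⟩) 3 (Finset.mem_Icc.mpr ⟨by omega, by omega⟩) (by omega)
    have hmul : 0 ≤ ε 1 * (d 3 - d 2) := mul_nonneg (by linarith) (by linarith)
    have hsq : (ε 1) ^ 2 ≤ 2 := by nlinarith
    have hle : ε 1 ≤ 1 := by nlinarith
    have heq1 : ε 1 = 1 := le_antisymm hle h1
    refine ⟨rfl, heq1, ?_⟩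
    rw [heq1] at h
    nlinarith
  · rintro ⟨hm3, hε1e, hd3⟩
    have hn1 : n = 1 := by omega
    subst hn1
    simp only [Finset.Icc_self, Finset.sum_singleton]
    rw [show Icc (1 + 1) 1 = ∅ from Finset.Icc_eq_empty (by omega),
        Finset.sum_empty, show (1 : ℕ) + 2 = 3 from rfl, hε1e, hd3]
    ring
end
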